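/- arXiv:1809.02284 — 4 statements merged into one kernel-verified Lean document; each statement's English description precedes it below -/
import Mathlib

section
/- Let X be a compact metric space and f : X → X a homeomorphism whose non-wandering set is all of X. Then the set of recurrent points of f (points x such that x is a limit of f^{n_k}(x) for some sequence n_k → ∞) is dense in X. -/
open Filter Topology

/-- If every point of a compact metric space is non-wandering for a homeomorphism `f`,
then the set of recurrent points of `f` is dense. -/
theorem recurrent_points_dense_of_nonwandering
    {X : Type*} [MetricSpace X] [CompactSpace X] (f : X ≃ₜ X)
    (hnw : ∀ x : X, ∀ U : Set X, IsOpen U → x ∈ U →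
      ∃ n : ℕ, 1 ≤ n ∧ ((⇑f)^[n] '' U ∩ U).Nonempty) :
    Dense {x : X | ∃ φ : ℕ → ℕ, StrictMono φ ∧ (∀ k, 1 ≤ φ k) ∧
      Tendsto (fun k => (⇑f)^[φ k] x) atTop (𝓝 x)} := by
  -- the open dense sets
  set G : ℕ → Set X := fun k => ⋃ n : ℕ, {x | 1 ≤ n ∧ dist ((⇑f)^[n] x) x < 1/(k+1)} with hG
  have hcont : ∀ n : ℕ, Continuous fun x : X => dist ((⇑f)^[n] x) x :=
    fun n => (f.continuous.iterate n).dist continuous_id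
  have hGopen : ∀ k, IsOpen (G k) := by
    intro k
    refine isOpen_iUnion fun n => ?_
    by_cases hn : 1 ≤ n
    · have : {x : X | 1 ≤ n ∧ dist ((⇑f)^[n] x) x < 1/(k+1)}
          = {x : X | dist ((⇑f)^[n] x) x < 1/(k+1)} := by
        ext x; simp [hn]
      rw [this]
      exact isOpen_lt (hcont n) continuous_const
    · have : {x : X | 1 ≤ n ∧ dist ((⇑f)^[n] x) x < 1/(k+1)} = ∅ := by
        ext x; simp [hn]
      rw [this]; exact isOpen_empty
  have hpos : ∀ k : ℕ, (0:ℝ) < 1/(k+1) := by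
    intro k; positivity
  have hGdense : ∀ k, Dense (G k) := by
    intro k
    rw [dense_iff_inter_open]
    intro V hV ⟨x, hx⟩
    obtain ⟨r, hr, hball⟩ := Metric.isOpen_iff.1 hV x hx
    set r' : ℝ := min r (1/(2*(k+1))) with hr'
    have hr'pos : 0 < r' := lt_min hr (by positivity)
    obtain ⟨n, hn1, z, hz1, hz2⟩ := hnw x (Metric.ball x r') Metric.isOpen_ball
      (Metric.mem_ball_self hr'pos)
    obtain ⟨w, hw, hwz⟩ := hz1
    refine ⟨w, hball (Metric.mem_ball.2 (lt_of_lt_of_le hw (min_le_left _ _))), ?_⟩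
    refine Set.mem_iUnion.2 ⟨n, hn1, ?_⟩
    have h1 : dist ((⇑f)^[n] w) x < r' := by rw [hwz]; exact hz2
    have h2 : dist w x < r' := hw
    calc dist ((⇑f)^[n] w) w ≤ dist ((⇑f)^[n] w) x + dist x w := dist_triangle _ _ _
      _ < r' + r' := by rw [dist_comm x w]; exact add_lt_add h1 h2
      _ ≤ 1/(2*(k+1)) + 1/(2*(k+1)) := add_le_add (min_le_right _ _) (min_le_right _ _)
      _ = 1/(k+1) := by
        have h : (1:ℝ)/(2*((k:ℝ)+1)) = 1/((k:ℝ)+1) / 2 := by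
          rw [div_div]; ring_nf
        linarith [h]
  have hdense : Dense (⋂ k, G k) := dense_iInter_of_isOpen hGopen hGdense
  refine hdense.mono ?_
  intro x hx
  simp only [Set.mem_iInter, hG, Set.mem_iUnion, Set.mem_setOf_eq] at hx
  by_cases hper : ∃ n, 1 ≤ n ∧ (⇑f)^[n] x = x
  · obtain ⟨n₀, hn₀, hfix⟩ := hper
    refine ⟨fun k => n₀ * (k+1), ?_, ?_, ?_⟩
    · intro a b hab
      have : a + 1 < b + 1 := by omega
      nlinarith
    · intro k; exact Nat.one_le_iff_ne_zero.2 (by positivity)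
    · have : ∀ k, (⇑f)^[n₀ * (k+1)] x = x := by
        intro k
        rw [Function.iterate_mul]
        exact Function.iterate_fixed hfix (k+1)
      simp only [this]
      exact tendsto_const_nhds
  · push_neg at hper
    have hdpos : ∀ n, 1 ≤ n → 0 < dist ((⇑f)^[n] x) x := by
      intro n hn
      exact dist_pos.2 (hper n hn)
    -- key: arbitrarily large good n
    have key : ∀ (ε : ℝ), 0 < ε → ∀ N : ℕ, ∃ n, N < n ∧ 1 ≤ n ∧ dist ((⇑f)^[n] x) x < ε := by
      intro ε hε N
      set s : Finset ℝ := insert ε ((Finset.Icc 1 N).image fun n => dist ((⇑f)^[n] x) x) with hs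
      have hsne : s.Nonempty := ⟨ε, Finset.mem_insert_self _ _⟩
      set δ := s.min' hsne with hδ
      have hδpos : 0 < δ := by
        rw [hδ]
        apply (Finset.lt_min'_iff _ _).2
        intro b hb
        rcases Finset.mem_insert.1 hb with h | h
        · rw [h]; exact hε
        · obtain ⟨m, hm, hmeq⟩ := Finset.mem_image.1 h
          rw [← hmeq]
          exact hdpos m (Finset.mem_Icc.1 hm).1
      have hδε : δ ≤ ε := Finset.min'_le _ _ (Finset.mem_insert_self _ _)
      obtain ⟨k, hk⟩ := exists_nat_one_div_lt hδpos
      obtain ⟨n, hn1, hnd⟩ := hx k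
      have hnδ : dist ((⇑f)^[n] x) x < δ := lt_trans hnd (by exact_mod_cast hk)
      refine ⟨n, ?_, hn1, lt_of_lt_of_le hnδ hδε⟩
      by_contra hN
      push_neg at hN
      have hmem : dist ((⇑f)^[n] x) x ∈ s := by
        rw [hs]
        exact Finset.mem_insert_of_mem (Finset.mem_image.2 ⟨n, Finset.mem_Icc.2 ⟨hn1, hN⟩, rfl⟩)
      exact absurd (Finset.min'_le _ _ hmem) (not_le.2 hnδ)
    -- build φ by recursion
    have key' : ∀ (k N : ℕ), ∃ n, N < n ∧ dist ((⇑f)^[n] x) x < 1/(k+1) := by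
      intro k N
      obtain ⟨n, h1, _, h3⟩ := key (1/(k+1)) (hpos k) N
      exact ⟨n, h1, h3⟩
    let φ : ℕ → ℕ := fun k =>
      Nat.rec (key' 0 0).choose (fun k ih => (key' (k+1) ih).choose) k
    have hφ0 : 0 < φ 0 ∧ dist ((⇑f)^[φ 0] x) x < 1/((0:ℕ)+1) := (key' 0 0).choose_spec
    have hφs : ∀ k : ℕ, φ k < φ (k+1) ∧ dist ((⇑f)^[φ (k+1)] x) x < 1/(((k:ℕ)+1:ℕ)+1) :=
      fun k => (key' (k+1) (φ k)).choose_spec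
    have hmono : StrictMono φ := strictMono_nat_of_lt_succ fun k => (hφs k).1
    have hd : ∀ k, dist ((⇑f)^[φ k] x) x < 1/(k+1) := by
      intro k
      cases k with
      | zero => exact hφ0.2
      | succ k => exact_mod_cast (hφs k).2
    refine ⟨φ, hmono, fun k => le_trans hφ0.1 (hmono.monotone (Nat.zero_le k)), ?_⟩
    rw [Metric.tendsto_atTop]
    intro ε hε
    obtain ⟨K, hK⟩ := exists_nat_one_div_lt hε
    refine ⟨K, fun k hk => ?_⟩
    calc dist ((⇑f)^[φ k] x) x < 1/(k+1) := hd k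
      _ ≤ 1/(K+1) := by
        apply one_div_le_one_div_of_le (by positivity)
        exact_mod_cast Nat.succ_le_succ hk
      _ < ε := hK
end

section
/- Let X be a compact metric space and f : X → X a homeomorphism. If every point of X is non-wandering for f, then for every integer k ≥ 1, every point of X is non-wandering for f^k. -/
/-- If every point of a compact metric space is non-wandering for a homeomorphism `f`,
then for every `k ≥ 1`, every point is non-wandering for `f^k`. -/
theorem nonwandering_of_iterate
    {X : Type*} [MetricSpace X] [CompactSpace X] (f : X ≃ₜ X)
    (hnw : ∀ x : X, ∀ U : Set X, IsOpen U → x ∈ U →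
      ∃ n : ℕ, 1 ≤ n ∧ ((⇑f)^[n] '' U ∩ U).Nonempty) :
    ∀ k : ℕ, 1 ≤ k → ∀ x : X, ∀ U : Set X, IsOpen U → x ∈ U →
      ∃ n : ℕ, 1 ≤ n ∧ (((⇑f)^[k])^[n] '' U ∩ U).Nonempty := by
  intro k hk x U hU hxU
  classical
  -- a step: from a nonempty open V, find m ≥ 1 such that V ∩ f^[m]⁻¹' V is nonempty open
  have step : ∀ V : Set X, IsOpen V → V.Nonempty →
      ∃ m : ℕ, 1 ≤ m ∧ (V ∩ (⇑f)^[m] ⁻¹' V).Nonempty := by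
    intro V hV hVne
    obtain ⟨y, hy⟩ := hVne
    obtain ⟨m, hm1, z, hz⟩ := hnw y V hV hy
    obtain ⟨⟨w, hwV, hwz⟩, hzV⟩ := hz
    exact ⟨m, hm1, ⟨w, hwV, by simpa [Set.mem_preimage, hwz] using hzV⟩⟩
  choose! m hm1 hmne using step
  -- the shrinking sequence of sets
  let W : ℕ → Set X := fun j => Nat.rec U (fun _ V => V ∩ (⇑f)^[m V] ⁻¹' V) j
  have hW0 : W 0 = U := rfl
  have hWsucc : ∀ j, W (j + 1) = W j ∩ (⇑f)^[m (W j)] ⁻¹' (W j) := fun j => rfl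
  have hWinv : ∀ j, IsOpen (W j) ∧ (W j).Nonempty ∧ W j ⊆ U := by
    intro j
    induction j with
    | zero => exact ⟨hU, ⟨x, hxU⟩, le_refl U⟩
    | succ j ih =>
      obtain ⟨ho, hne, hsub⟩ := ih
      refine ⟨ho.inter ((f.continuous.iterate _).isOpen_preimage _ ho), ?_, ?_⟩
      · exact hmne (W j) ho hne
      · rw [hWsucc]; exact fun y hy => hsub hy.1
  -- step lengths and partial sums
  set n : ℕ → ℕ := fun j => m (W j) with hn
  set T : ℕ → ℕ := fun j => ∑ i ∈ Finset.range j, n i with hT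
  have hTsucc : ∀ j, T (j + 1) = T j + n j := fun j => Finset.sum_range_succ n j
  have hn1 : ∀ j, 1 ≤ n j := fun j => hm1 (W j) (hWinv j).1 (hWinv j).2.1
  have hTmono : StrictMono T := strictMono_nat_of_lt_succ (fun j => by
    have := hn1 j; rw [hTsucc]; omega)
  -- points of W (i+j) return to W i after T(i+j) - T i steps
  have key : ∀ i j : ℕ, ∀ y ∈ W (i + j), (⇑f)^[T (i + j) - T i] y ∈ W i := by
    intro i j
    induction j with
    | zero => intro y hy; simpa using hy
    | succ j ih =>
      intro y hy
      rw [show i + (j + 1) = i + j + 1 from rfl, hWsucc] at hy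
      have h1 : (⇑f)^[n (i + j)] y ∈ W (i + j) := hy.2
      have h2 := ih _ h1
      have hle : T i ≤ T (i + j) := hTmono.monotone (Nat.le_add_right i j)
      have harith : T (i + j + 1) - T i = (T (i + j) - T i) + n (i + j) := by
        have := hTsucc (i + j); omega
      rw [show i + (j + 1) = i + j + 1 from rfl, harith,
        Function.iterate_add_apply]
      exact h2
  -- pigeonhole on T mod k
  haveI : NeZero k := ⟨by omega⟩
  obtain ⟨a, ha, b, hb, hab, heq⟩ :=
    Finset.exists_ne_map_eq_of_card_lt_of_maps_to
      (s := Finset.range (k + 1)) (t := (Finset.univ : Finset (ZMod k)))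
      (by simp [ZMod.card]) (fun i _ => Finset.mem_univ ((T i : ZMod k)))
  -- wlog a < b
  obtain ⟨i, j, hij, hij'⟩ : ∃ i j : ℕ, i < j ∧ (T i : ZMod k) = (T j : ZMod k) := by
    rcases lt_or_gt_of_ne hab with h | h
    · exact ⟨a, b, h, heq⟩
    · exact ⟨b, a, h, heq.symm⟩
  have hTle : T i ≤ T j := (hTmono hij).le
  have hdvd : k ∣ T j - T i := by
    have hmod : T i ≡ T j [MOD k] := (ZMod.natCast_eq_natCast_iff _ _ _).mp hij'
    exact (Nat.modEq_iff_dvd' hTle).mp hmod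
  obtain ⟨q, hq⟩ := hdvd
  have hS1 : 1 ≤ T j - T i := by
    have := hTmono hij; omega
  have hq1 : 1 ≤ q := by
    rcases Nat.eq_zero_or_pos q with h | h
    · subst h; simp at hq; omega
    · exact h
  refine ⟨q, hq1, ?_⟩
  obtain ⟨y, hy⟩ := (hWinv j).2.1
  have hy' : (⇑f)^[T j - T i] y ∈ W i := by
    have := key i (j - i) y (by rwa [Nat.add_sub_cancel' hij.le])
    rwa [Nat.add_sub_cancel' hij.le] at this
  refine ⟨(⇑f)^[T j - T i] y, ⟨y, (hWinv j).2.2 hy, ?_⟩, (hWinv i).2.2 hy'⟩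
  rw [← Function.iterate_mul, ← hq]
end

section
/- Let g : X → X be a homeomorphism of a topological space, V a finite group acting on X by homeomorphisms that commute with g, and x ∈ X a point such that for every γ ∈ V there exists β ∈ V with β·x in the omega-limit set of γ·x under g. Assume moreover that the assignment γ ↦ β defines a map η : V → V which is a bijection. Then x is non-wandering for g, i.e., for every open neighborhood U of x there exists m ≥ 1 with g^m(U) ∩ U ≠ ∅. -/
open Filter Topology

/-- If a finite group `V` acts on a metric space `X` by homeomorphisms commuting with a
homeomorphism `g`, `x` is a point such that the map `η : V → V` is a bijection and for every
`γ ∈ V` the point `η γ • x` lies in the omega-limit set of `γ • x` under `g`, then `x` is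
non-wandering for `g`. -/
theorem nonwandering_of_finite_group_omega_limit
    {X : Type*} [MetricSpace X] (g : X ≃ₜ X)
    (V : Type*) [Group V] [Finite V] [MulAction V X]
    (hcont : ∀ γ : V, Continuous (fun y : X => γ • y))
    (hcomm : ∀ (γ : V) (y : X), g (γ • y) = γ • g y)
    (x : X) (η : V → V) (hη : Function.Bijective η)
    (hω : ∀ γ : V, ∃ φ : ℕ → ℕ, StrictMono φ ∧
      Tendsto (fun j => (⇑g)^[φ j] (γ • x)) atTop (𝓝 (η γ • x))) :
    ∀ U : Set X, IsOpen U → x ∈ U →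
      ∃ m : ℕ, 1 ≤ m ∧ ((⇑g)^[m] '' U ∩ U).Nonempty := by
  intro U hU hxU
  -- smul by γ is an open map since its inverse image description
  have hsmul_open : ∀ (γ : V) (W : Set X), IsOpen W → IsOpen ((fun y : X => γ • y) '' W) := by
    intro γ W hW
    have : (fun y : X => γ • y) '' W = (fun y : X => γ⁻¹ • y) ⁻¹' W := by
      ext z
      constructor
      · rintro ⟨w, hw, rfl⟩
        simpa [inv_smul_smul] using hw
      · intro hz
        exact ⟨γ⁻¹ • z, hz, by simp [smul_inv_smul]⟩
    rw [this]
    exact hW.preimage (hcont γ⁻¹)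
  -- iterates of g commute with the action
  have hcommn : ∀ (n : ℕ) (γ : V) (y : X), (⇑g)^[n] (γ • y) = γ • (⇑g)^[n] y := by
    intro n
    induction n with
    | zero => intro γ y; simp
    | succ n ih =>
      intro γ y
      rw [Function.iterate_succ_apply', Function.iterate_succ_apply', ih, hcomm]
  -- find k ≥ 1 with η^[k] 1 = 1
  obtain ⟨a, b, hab, heq⟩ : ∃ a b : ℕ, a ≠ b ∧ η^[a] (1 : V) = η^[b] (1 : V) := by
    obtain ⟨a, b, hab, heq⟩ :=
      Finite.exists_ne_map_eq_of_infinite (fun n : ℕ => η^[n] (1 : V))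
    exact ⟨a, b, hab, heq⟩
  have hηinj : Function.Injective η := hη.1
  obtain ⟨k, hk1, hkfix⟩ : ∃ k : ℕ, 1 ≤ k ∧ η^[k] (1 : V) = 1 := by
    rcases lt_or_gt_of_ne hab with h | h
    · refine ⟨b - a, by omega, ?_⟩
      have : η^[a] (η^[b - a] (1 : V)) = η^[a] (1 : V) := by
        rw [← Function.iterate_add_apply]
        rw [show a + (b - a) = b by omega]
        exact heq.symm
      exact (hηinj.iterate a) this
    · refine ⟨a - b, by omega, ?_⟩
      have : η^[b] (η^[a - b] (1 : V)) = η^[b] (1 : V) := by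
        rw [← Function.iterate_add_apply]
        rw [show b + (a - b) = a by omega]
        exact heq
      exact (hηinj.iterate b) this
  set σ : ℕ → V := fun i => η^[i] (1 : V) with hσ
  -- main chain claim
  have claim : ∀ i, i ≤ k → ∃ (W : Set X) (m : ℕ), IsOpen W ∧ x ∈ W ∧ W ⊆ U ∧ i ≤ m ∧
      ∀ y ∈ W, (⇑g)^[m] (σ (k - i) • y) ∈ U := by
    intro i
    induction i with
    | zero =>
      intro _
      refine ⟨U, 0, hU, hxU, le_rfl, le_rfl, ?_⟩
      intro y hy
      have h0 : σ k = 1 := hkfix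
      simp only [Nat.sub_zero, h0, one_smul, Function.iterate_zero_apply]
      exact hy
    | succ i ih =>
      intro hik
      obtain ⟨W, m, hWopen, hxW, hWU, him, hW⟩ := ih (by omega)
      set j := k - (i + 1) with hj
      have hj1 : j + 1 = k - i := by omega
      have hσj : η (σ j) = σ (k - i) := by
        rw [← hj1, hσ]
        simp [Function.iterate_succ_apply']
      obtain ⟨φ, hφ, htend⟩ := hω (σ j)
      -- open neighborhood of σ (k-i) • x
      set S : Set X := (fun y : X => σ (k - i) • y) '' W with hS
      have hSopen : IsOpen S := hsmul_open _ _ hWopen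
      have hxS : σ (k - i) • x ∈ S := ⟨x, hxW, rfl⟩
      rw [hσj] at htend
      have hev : ∀ᶠ l in atTop, (⇑g)^[φ l] (σ j • x) ∈ S :=
        htend (hSopen.mem_nhds hxS)
      obtain ⟨l, hlS, hl1⟩ := (hev.and (eventually_ge_atTop 1)).exists
      set n := φ l with hn
      have hn1 : 1 ≤ n := le_trans hl1 (hφ.le_apply)
      set W' : Set X := W ∩ (fun y : X => (⇑g)^[n] (σ j • y)) ⁻¹' S with hW'
      have hW'open : IsOpen W' := by
        apply hWopen.inter
        apply hSopen.preimage
        exact (g.continuous.iterate n).comp (hcont (σ j))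
      have hxW' : x ∈ W' := ⟨hxW, hlS⟩
      refine ⟨W', m + n, hW'open, hxW', fun y hy => hWU hy.1, by omega, ?_⟩
      intro y hy
      obtain ⟨w, hw, hweq⟩ := hy.2
      have h2 : (⇑g)^[m + n] (σ j • y) = (⇑g)^[m] ((⇑g)^[n] (σ j • y)) :=
        Function.iterate_add_apply _ m n _
      have hweq' : σ (k - i) • w = (⇑g)^[n] (σ j • y) := hweq
      rw [h2, ← hweq']
      exact hW w hw
  obtain ⟨W, m, hWopen, hxW, hWU, hkm, hW⟩ := claim k le_rfl
  have hσ0 : σ (k - k) = 1 := by simp [hσ]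
  refine ⟨m, by omega, (⇑g)^[m] x, ⟨x, hWU hxW, rfl⟩, ?_⟩
  have := hW x hxW
  rwa [hσ0, one_smul] at this
end

section
/- Hölder's theorem: a group acting freely on the real line by order-preserving bijections is abelian. Precisely, if G is a group and ρ : G → (order-preserving bijections of ℝ) is a group homomorphism such that for every g ≠ 1 in G the map ρ(g) has no fixed point, then G is abelian. -/
namespace HolderAux

variable {G : Type*} [Group G] (ρ : G →* Equiv.Perm ℝ)

/-- "g > 1" : g moves every point to the right. -/
def Pos (g : G) : Prop := ∀ x : ℝ, x < ρ g x

/-- pointwise strict order. -/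
def Lt (a b : G) : Prop := ∀ x : ℝ, ρ a x < ρ b x

/-- pointwise order. -/
def Le (a b : G) : Prop := ∀ x : ℝ, ρ a x ≤ ρ b x

lemma perm_mul (a b : G) (x : ℝ) : ρ (a * b) x = ρ a (ρ b x) := by
  simp [map_mul]

lemma perm_inv_apply (a : G) (x : ℝ) : ρ a (ρ a⁻¹ x) = x := by
  simp [map_inv]

lemma perm_apply_inv (a : G) (x : ℝ) : ρ a⁻¹ (ρ a x) = x := by
  simp [map_inv]

lemma pos_inv_of_neg {g : G} (h : ∀ x : ℝ, ρ g x < x) : Pos ρ g⁻¹ := by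
  intro x
  have := h (ρ g⁻¹ x)
  rwa [perm_inv_apply] at this

lemma pos_mul_inv_iff_lt (u v : G) : Pos ρ (u * v⁻¹) ↔ Lt ρ v u := by
  constructor
  · intro h y
    have := h (ρ v y)
    rwa [perm_mul, perm_apply_inv] at this
  · intro h x
    rw [perm_mul]
    have := h (ρ v⁻¹ x)
    rwa [perm_inv_apply] at this

lemma lt_le {a b : G} (h : Lt ρ a b) : Le ρ a b := fun x => (h x).le

lemma pos_pow {ε : G} (hε : Pos ρ ε) (n : ℕ) : Pos ρ (ε ^ (n + 1)) := by
  induction n with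
  | zero => simpa using hε
  | succ m ih =>
    intro x
    have h1 : x < ρ (ε ^ (m + 1)) x := ih x
    have h2 : ρ (ε ^ (m + 1)) x < ρ ε (ρ (ε ^ (m + 1)) x) := hε _
    rw [← perm_mul, ← pow_succ'] at h2
    exact h1.trans h2

lemma pos_zpow {ε : G} (hε : Pos ρ ε) {k : ℤ} (hk : 0 < k) : Pos ρ (ε ^ k) := by
  obtain ⟨n, rfl⟩ : ∃ n : ℕ, k = ((n + 1 : ℕ) : ℤ) := ⟨k.toNat - 1, by omega⟩
  rw [zpow_natCast]
  exact pos_pow ρ hε n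

variable (hmono : ∀ g : G, StrictMono (ρ g)) (hfree : ∀ g : G, g ≠ 1 → ∀ x : ℝ, ρ g x ≠ x)

include hmono

lemma cont (g : G) : Continuous (ρ g) :=
  (StrictMono.orderIsoOfSurjective _ (hmono g) (ρ g).surjective).continuous

lemma le_inv {a b : G} (h : Le ρ a b) : Le ρ b⁻¹ a⁻¹ := by
  intro x
  have h1 : ρ a (ρ b⁻¹ x) ≤ ρ b (ρ b⁻¹ x) := h _
  rw [perm_inv_apply] at h1
  have h2 := (hmono a⁻¹).monotone h1
  rwa [perm_apply_inv] at h2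

lemma mul_le_mul {u v a b : G} (h1 : Le ρ u a) (h2 : Le ρ v b) : Le ρ (u * v) (a * b) := by
  intro x
  rw [perm_mul, perm_mul]
  exact le_trans ((hmono u).monotone (h2 x)) (h1 (ρ b x))

lemma mul_lt_mul {u v a b : G} (h1 : Lt ρ u a) (h2 : Le ρ v b) : Lt ρ (u * v) (a * b) := by
  intro x
  rw [perm_mul, perm_mul]
  exact lt_of_le_of_lt ((hmono u).monotone (h2 x)) (h1 (ρ b x))

lemma zpow_lt {ε : G} (hε : Pos ρ ε) {j k : ℤ} (hjk : j < k) : Lt ρ (ε ^ j) (ε ^ k) := by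
  have hpos : Pos ρ (ε ^ (k - j)) := pos_zpow ρ hε (by omega)
  intro x
  have h := hpos (ρ (ε ^ j) x)
  rw [← perm_mul, ← zpow_add] at h
  have hkj : k - j + j = k := by ring
  rwa [hkj] at h

/-- archimedean property at 0. -/
lemma arch0 {ε : G} (hε : Pos ρ ε) (M : ℝ) : ∃ n : ℕ, M < ρ (ε ^ n) 0 := by
  by_contra hcon
  push_neg at hcon
  set s : Set ℝ := Set.range (fun n : ℕ => ρ (ε ^ n) 0) with hs
  have hne : s.Nonempty := ⟨ρ (ε ^ 0) 0, ⟨0, rfl⟩⟩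
  have hbdd : BddAbove s := ⟨M, by rintro y ⟨n, rfl⟩; exact hcon n⟩
  set L := sSup s with hL
  have h1 : ρ ε⁻¹ L < L := by
    have := hε (ρ ε⁻¹ L)
    rwa [perm_inv_apply] at this
  obtain ⟨y, hy, hy2⟩ := exists_lt_of_lt_csSup hne h1
  obtain ⟨n, rfl⟩ := hy
  have h2 : L < ρ ε (ρ (ε ^ n) 0) := by
    have := (hmono ε) hy2
    rwa [perm_inv_apply] at this
  have h3 : ρ ε (ρ (ε ^ n) 0) = ρ (ε ^ (n + 1)) 0 := by
    rw [← perm_mul, ← pow_succ']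
  have h4 : ρ (ε ^ (n + 1)) 0 ≤ L := le_csSup hbdd ⟨n + 1, rfl⟩
  rw [h3] at h2
  exact absurd h4 (not_le_of_gt h2)

include hfree

/-- key trichotomy for a single element, via connectedness of ℝ. -/
lemma tri (g : G) : g = 1 ∨ Pos ρ g ∨ (∀ x : ℝ, ρ g x < x) := by
  by_cases hg : g = 1
  · exact Or.inl hg
  right
  have hA : IsOpen {x : ℝ | x < ρ g x} := isOpen_lt continuous_id (cont ρ hmono g)
  have hB : IsOpen {x : ℝ | ρ g x < x} := isOpen_lt (cont ρ hmono g) continuous_id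
  have hBcomp : {x : ℝ | x < ρ g x}ᶜ = {x : ℝ | ρ g x < x} := by
    ext x
    simp only [Set.mem_compl_iff, Set.mem_setOf_eq, not_lt]
    constructor
    · exact fun h => lt_of_le_of_ne h (hfree g hg x)
    · exact le_of_lt
  have hclopen : IsClopen {x : ℝ | x < ρ g x} := by
    refine ⟨⟨?_⟩, hA⟩
    rw [hBcomp]; exact hB
  rcases isClopen_iff.mp hclopen with h | h
  · right
    intro x
    have hx : x ∈ {x : ℝ | x < ρ g x}ᶜ := by rw [h]; simp
    rw [hBcomp] at hx
    exact hx
  · left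
    intro x
    have hx : x ∈ {x : ℝ | x < ρ g x} := by rw [h]; trivial
    exact hx

/-- total trichotomy of the pointwise order. -/
lemma total (a b : G) : Lt ρ a b ∨ a = b ∨ Lt ρ b a := by
  rcases tri ρ hmono hfree (b * a⁻¹) with h | h | h
  · right; left
    exact (mul_inv_eq_one.mp h).symm
  · left; exact (pos_mul_inv_iff_lt ρ b a).mp h
  · right; right
    have h2 : Pos ρ (b * a⁻¹)⁻¹ := pos_inv_of_neg ρ h
    rw [mul_inv_rev, inv_inv] at h2
    exact (pos_mul_inv_iff_lt ρ a b).mp h2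

lemma not_le {a b : G} (h : ¬ Le ρ a b) : Lt ρ b a := by
  rcases total ρ hmono hfree a b with h1 | h1 | h1
  · exact absurd (lt_le ρ h1) h
  · subst h1; exact absurd (fun x => le_refl _) h
  · exact h1

omit hfree in
lemma antisym {a b : G} (h1 : Le ρ a b) (h2 : Lt ρ b a) : False :=
  absurd (h1 0) (not_le_of_gt (h2 0))

/-- for every a there is n with a ≤ εⁿ. -/
lemma exists_le {ε : G} (hε : Pos ρ ε) (a : G) : ∃ n : ℕ, Le ρ a (ε ^ n) := by
  obtain ⟨n, hn⟩ := arch0 ρ hmono hε (ρ a 0)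
  refine ⟨n, ?_⟩
  rcases total ρ hmono hfree a (ε ^ n) with h | h | h
  · exact lt_le ρ h
  · subst h; exact fun x => le_refl _
  · exact absurd hn (not_lt_of_gt (h 0))

/-- integer part: εᵐ ≤ a < εᵐ⁺¹. -/
lemma exists_mem_Ico {ε : G} (hε : Pos ρ ε) (a : G) :
    ∃ m : ℤ, Le ρ (ε ^ m) a ∧ Lt ρ a (ε ^ (m + 1)) := by
  have hinh : ∃ k : ℤ, Le ρ (ε ^ k) a := by
    obtain ⟨n, hn⟩ := exists_le ρ hmono hfree hε a⁻¹
    refine ⟨-(n : ℤ), ?_⟩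
    have h := le_inv ρ hmono hn
    rwa [inv_inv, ← zpow_natCast, ← zpow_neg] at h
  have hbdd : ∃ b : ℤ, ∀ k : ℤ, Le ρ (ε ^ k) a → k ≤ b := by
    obtain ⟨n, hn⟩ := exists_le ρ hmono hfree hε a
    rw [← zpow_natCast] at hn
    refine ⟨n, fun k hk => ?_⟩
    by_contra hlt
    push_neg at hlt
    have h1 : Lt ρ (ε ^ (n : ℤ)) (ε ^ k) := zpow_lt ρ hmono hε hlt
    exact lt_irrefl _ (lt_of_lt_of_le (lt_of_lt_of_le (h1 0) (hk 0)) (hn 0))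
  obtain ⟨m, hm, hmax⟩ := Int.exists_greatest_of_bdd hbdd hinh
  refine ⟨m, hm, ?_⟩
  have hnot : ¬ Le ρ (ε ^ (m + 1)) a := fun h => by
    have := hmax _ h; omega
  exact not_le ρ hmono hfree hnot

/-- choice of a "square root below c". -/
lemma exists_sqrt {c δ : G} (hδ : Pos ρ δ) (hδc : Lt ρ δ c) :
    ∃ ε : G, Pos ρ ε ∧ Le ρ (ε * ε) c := by
  by_cases h2 : Le ρ (δ * δ) c
  · exact ⟨δ, hδ, h2⟩
  have hcδδ : Lt ρ c (δ * δ) := not_le ρ hmono hfree h2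
  refine ⟨δ⁻¹ * c, ?_, ?_⟩
  · intro x
    rw [perm_mul]
    have h := hδc x
    have h' : ρ δ x < ρ δ (ρ δ⁻¹ (ρ c x)) := by rwa [perm_inv_apply]
    exact (hmono δ).lt_iff_lt.mp h'
  · have hεδ : Lt ρ (δ⁻¹ * c) δ := by
      intro x
      rw [perm_mul]
      have h := hcδδ x
      rw [perm_mul] at h
      have h' := (hmono δ⁻¹) h
      rwa [perm_apply_inv] at h'
    intro x
    rw [perm_mul]
    have h1 : ρ (δ⁻¹ * c) (ρ (δ⁻¹ * c) x) < ρ δ (ρ (δ⁻¹ * c) x) := hεδ _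
    have h2' : ρ δ (ρ (δ⁻¹ * c) x) = ρ c x := by
      rw [← perm_mul, mul_inv_cancel_left]
    rw [h2'] at h1
    exact h1.le

/-- the main contradiction: the commutator can't have a square root. -/
lemma comm_pos_case_a {a b : G}
    {ε : G} (hε : Pos ρ ε) (hsq : Le ρ (ε * ε) ((b * a) * (a * b)⁻¹)) : False := by
  obtain ⟨m, hm1, hm2⟩ := exists_mem_Ico ρ hmono hfree hε a
  obtain ⟨n, hn1, hn2⟩ := exists_mem_Ico ρ hmono hfree hε b
  have h1 : Le ρ (ε ^ (m + n)) (a * b) := by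
    have h := mul_le_mul ρ hmono hm1 hn1
    rwa [← zpow_add] at h
  have h2 : Lt ρ (b * a) (ε ^ (m + n + 2)) := by
    have h := mul_lt_mul ρ hmono hn2 (lt_le ρ hm2)
    rw [← zpow_add] at h
    have heq : n + 1 + (m + 1) = m + n + 2 := by ring
    rwa [heq] at h
  have h3 : Le ρ (a * b)⁻¹ (ε ^ (-(m + n))) := by
    have h := le_inv ρ hmono h1
    rwa [← zpow_neg] at h
  have h4 : Lt ρ ((b * a) * (a * b)⁻¹) (ε ^ (m + n + 2) * ε ^ (-(m + n))) :=
    mul_lt_mul ρ hmono h2 h3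
  rw [← zpow_add] at h4
  have heq : m + n + 2 + -(m + n) = (2 : ℤ) := by ring
  rw [heq] at h4
  have h5 : (ε : G) ^ (2 : ℤ) = ε * ε := by
    rw [show (2 : ℤ) = 1 + 1 by norm_num, zpow_add, zpow_one]
  rw [h5] at h4
  exact antisym ρ hmono hsq h4

/-- if the commutator of a,b is positive then a and b commute. -/
lemma comm_of_pos {a b : G} (hc : Pos ρ ((b * a) * (a * b)⁻¹)) : a * b = b * a := by
  set c := (b * a) * (a * b)⁻¹ with hcdef
  by_cases hδ : ∃ δ : G, Pos ρ δ ∧ Lt ρ δ c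
  · obtain ⟨δ, hδ1, hδ2⟩ := hδ
    obtain ⟨ε, hε1, hε2⟩ := exists_sqrt ρ hmono hfree hδ1 hδ2
    exact absurd (comm_pos_case_a ρ hmono hfree hε1 hε2) id
  push_neg at hδ
  have hcyc : ∀ g : G, ∃ m : ℤ, g = c ^ m := by
    intro g
    obtain ⟨m, hm1, hm2⟩ := exists_mem_Ico ρ hmono hfree hc g
    refine ⟨m, ?_⟩
    set d := g * (c ^ m)⁻¹ with hd
    have hdc : Lt ρ d c := by
      have hrefl : Le ρ (c ^ m)⁻¹ (c ^ m)⁻¹ := fun x => le_refl _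
      have h := mul_lt_mul ρ hmono hm2 hrefl
      rwa [show c ^ (m + 1) * (c ^ m)⁻¹ = c by rw [zpow_add, zpow_one]; group] at h
    rcases tri ρ hmono hfree d with h | h | h
    · rw [hd, mul_inv_eq_one] at h; exact h
    · exact absurd h (fun hp => hδ d hp hdc)
    · have hpos : Pos ρ d⁻¹ := pos_inv_of_neg ρ h
      rw [hd, mul_inv_rev, inv_inv] at hpos
      have hlt : Lt ρ g (c ^ m) := (pos_mul_inv_iff_lt ρ (c ^ m) g).mp hpos
      exact absurd (hm1 0) (not_le_of_gt (hlt 0))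
  obtain ⟨p, hp⟩ := hcyc a
  obtain ⟨q, hq⟩ := hcyc b
  rw [hp, hq, ← zpow_add, ← zpow_add, add_comm]

end HolderAux

/-- Hölder's theorem: a group acting freely on the real line by order-preserving
bijections is abelian. -/
theorem holder_abelian_of_free_action
    {G : Type*} [Group G] (ρ : G →* Equiv.Perm ℝ)
    (hmono : ∀ g : G, StrictMono (ρ g))
    (hfree : ∀ g : G, g ≠ 1 → ∀ x : ℝ, ρ g x ≠ x) :
    ∀ a b : G, a * b = b * a := by
  intro a b
  rcases HolderAux.tri ρ hmono hfree ((b * a) * (a * b)⁻¹) with h | h | h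
  · rw [mul_inv_eq_one] at h
    exact h.symm
  · exact HolderAux.comm_of_pos ρ hmono hfree h
  · have hpos : HolderAux.Pos ρ (((b * a) * (a * b)⁻¹)⁻¹) := HolderAux.pos_inv_of_neg ρ h
    rw [mul_inv_rev, inv_inv] at hpos
    exact (HolderAux.comm_of_pos ρ hmono hfree hpos).symm
end
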